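/- For every integer n ≥ 1, the Lebesgue volume of the set {x ∈ [0,1]^n : for every subset S ⊆ {1,…,n} of odd cardinality, Σ_{i∉S} x_i − Σ_{i∈S} x_i ≤ n − |S| − 1} equals 1 − 2^{n−1}/n!. (This set is the demicube obtained from the n-cycle local polytope slice at symmetric marginal t = 1/2, after rescaling by t.) -/

import Mathlib

open MeasureTheory Finset
open scoped symmDiff
set_option maxHeartbeats 1000000


lemma simplex_msble (n : ℕ) (t : ℝ) :
    MeasurableSet {y : Fin n → ℝ | (∀ i, 0 ≤ y i) ∧ ∑ i, y i ≤ t} := by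
  have : {y : Fin n → ℝ | (∀ i, 0 ≤ y i) ∧ ∑ i, y i ≤ t}
      = (⋂ i, {y : Fin n → ℝ | 0 ≤ y i}) ∩ {y | ∑ i, y i ≤ t} := by
    ext y; simp [Set.mem_iInter]
  rw [this]
  exact (MeasurableSet.iInter fun i =>
      measurableSet_le measurable_const (measurable_pi_apply i)).inter
    (measurableSet_le (Finset.measurable_sum _ fun i _ => measurable_pi_apply i)
      measurable_const)

lemma vol_simplex : ∀ (n : ℕ) (t : ℝ), 0 ≤ t →
    volume {y : Fin n → ℝ | (∀ i, 0 ≤ y i) ∧ ∑ i, y i ≤ t}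
      = ENNReal.ofReal (t ^ n / n.factorial)
  | 0, t, ht => by
      have : {y : Fin 0 → ℝ | (∀ i, 0 ≤ y i) ∧ ∑ i, y i ≤ t} = Set.univ := by
        ext y; simp [Finset.univ_eq_empty, ht]
      rw [this]
      simp [volume_pi, Measure.pi_univ]
  | (n+1), t, ht => by
      set e := MeasurableEquiv.piFinSuccAbove (fun _ : Fin (n+1) => ℝ) 0 with he
      have hmp := volume_preserving_piFinSuccAbove (fun _ : Fin (n+1) => ℝ) 0
      set A : Set (ℝ × (Fin n → ℝ)) :=
        {p | (0 ≤ p.1 ∧ ∀ i, 0 ≤ p.2 i) ∧ p.1 + ∑ i, p.2 i ≤ t} with hA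
      have hAm : MeasurableSet A := by
        have : A = ({p : ℝ × (Fin n → ℝ) | 0 ≤ p.1} ∩ ⋂ i, {p | 0 ≤ p.2 i})
            ∩ {p | p.1 + ∑ i, p.2 i ≤ t} := by
          ext p; simp [hA, Set.mem_iInter, and_assoc]
        rw [this]
        have hsum : Measurable fun p : ℝ × (Fin n → ℝ) => p.1 + ∑ i, p.2 i :=
          measurable_fst.add
            (Finset.measurable_sum _ fun i _ => (measurable_pi_apply i).comp measurable_snd)
        exact ((measurableSet_le measurable_const measurable_fst).inter
          (MeasurableSet.iInter fun i => measurableSet_le measurable_const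
            ((measurable_pi_apply i).comp measurable_snd))).inter
          (measurableSet_le hsum measurable_const)
      have hpre : {y : Fin (n+1) → ℝ | (∀ i, 0 ≤ y i) ∧ ∑ i, y i ≤ t} = e ⁻¹' A := by
        ext x
        have hx : e x = (x 0, fun j => x (Fin.succAbove 0 j)) := rfl
        simp only [Set.mem_preimage, hx, hA, Set.mem_setOf_eq]
        constructor
        · rintro ⟨h1, h2⟩
          exact ⟨⟨h1 0, fun i => h1 _⟩, by rwa [← Fin.sum_univ_succAbove x 0]⟩
        · rintro ⟨⟨h1, h2⟩, h3⟩
          refine ⟨fun i => ?_, by rwa [Fin.sum_univ_succAbove x 0]⟩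
          rcases Fin.eq_zero_or_eq_succ i with rfl | ⟨j, rfl⟩
          · exact h1
          · exact h2 j
      rw [hpre, hmp.measure_preimage hAm.nullMeasurableSet]
      have : (volume : Measure (ℝ × (Fin n → ℝ))) = (volume : Measure ℝ).prod volume := rfl
      rw [this, Measure.prod_apply hAm]
      have hslice : ∀ a : ℝ, volume (Prod.mk a ⁻¹' A)
          = Set.indicator (Set.Icc 0 t)
            (fun a => ENNReal.ofReal ((t - a) ^ n / n.factorial)) a := by
        intro a
        by_cases ha : a ∈ Set.Icc 0 t
        · rw [Set.indicator_of_mem ha]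
          have : Prod.mk a ⁻¹' A = {b : Fin n → ℝ | (∀ i, 0 ≤ b i) ∧ ∑ i, b i ≤ t - a} := by
            ext b
            simp only [Set.mem_preimage, hA, Set.mem_setOf_eq]
            constructor
            · rintro ⟨⟨-, h2⟩, h3⟩; exact ⟨h2, by linarith⟩
            · rintro ⟨h2, h3⟩; exact ⟨⟨ha.1, h2⟩, by linarith⟩
          rw [this, vol_simplex n (t - a) (by linarith [ha.2])]
        · rw [Set.indicator_of_notMem ha]
          have : Prod.mk a ⁻¹' A = ∅ := by
            ext b
            simp only [Set.mem_preimage, hA, Set.mem_setOf_eq, Set.mem_empty_iff_false,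
              iff_false, not_and]
            rintro ⟨h0a, hb⟩ hs
            exact ha ⟨h0a, by nlinarith [Finset.sum_nonneg (fun i (_ : i ∈ Finset.univ) => hb i)]⟩
          rw [this, measure_empty]
      simp_rw [hslice]
      rw [lintegral_indicator measurableSet_Icc]
      have hcont : Continuous fun a : ℝ => (t - a) ^ n / n.factorial :=
        (((continuous_const.sub continuous_id).pow n).div_const _)
      have hint : IntegrableOn (fun a : ℝ => (t - a) ^ n / n.factorial) (Set.Icc 0 t) :=
        hcont.integrableOn_Icc
      have hnn : 0 ≤ᵐ[volume.restrict (Set.Icc 0 t)]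
          fun a : ℝ => (t - a) ^ n / n.factorial := by
        refine (ae_restrict_mem measurableSet_Icc).mono fun x hx => ?_
        have : (0:ℝ) ≤ (t - x) ^ n := pow_nonneg (by linarith [hx.2]) n
        positivity
      rw [← ofReal_integral_eq_lintegral_ofReal hint hnn]
      congr 1
      rw [MeasureTheory.integral_Icc_eq_integral_Ioc,
        ← intervalIntegral.integral_of_le ht, intervalIntegral.integral_div]
      have h1 : (∫ a in (0:ℝ)..t, (t - a) ^ n) = t ^ (n+1) / (n+1) := by
        rw [intervalIntegral.integral_comp_sub_left (fun x => x ^ n) t]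
        simp [integral_pow]
      rw [h1, div_div]
      have h2 : ((n+1).factorial : ℝ) = (n+1) * n.factorial := by
        rw [Nat.factorial_succ]; push_cast; ring
      rw [h2]


lemma vol_hyperplane (n : ℕ) (hn : 1 ≤ n) :
    volume {y : Fin n → ℝ | ∑ i, y i = 1} = 0 := by
  classical
  set L : (Fin n → ℝ) →ₗ[ℝ] ℝ := ∑ i, LinearMap.proj i with hL
  have hLapp : ∀ x : Fin n → ℝ, L x = ∑ i, x i := by
    intro x; simp [hL, LinearMap.sum_apply, LinearMap.proj_apply]
  have hker : (LinearMap.ker L : Submodule ℝ (Fin n → ℝ)) ≠ ⊤ := by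
    intro h
    have h1 : (fun _ => (1:ℝ)) ∈ LinearMap.ker L := h.symm ▸ Submodule.mem_top
    have h2 : L (fun _ => (1:ℝ)) = n := by
      rw [hLapp]; simp
    rw [LinearMap.mem_ker, h2] at h1
    exact (Nat.cast_pos.mpr hn).ne' (by exact_mod_cast h1)
  have hnull : volume (LinearMap.ker L : Set (Fin n → ℝ)) = 0 :=
    Measure.addHaar_submodule volume _ hker
  have i0 : Fin n := ⟨0, hn⟩
  set v : Fin n → ℝ := Pi.single i0 1 with hv
  have hvs : ∑ i, v i = 1 := by simp [hv]
  have hset : {y : Fin n → ℝ | ∑ i, y i = 1}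
      = (fun x => x + (-v)) ⁻¹' (LinearMap.ker L : Set (Fin n → ℝ)) := by
    ext x
    simp only [Set.mem_setOf_eq, Set.mem_preimage, SetLike.mem_coe, LinearMap.mem_ker, hLapp]
    have : ∑ i, (x + -v) i = (∑ i, x i) - 1 := by
      simp only [Pi.add_apply, Pi.neg_apply, Finset.sum_add_distrib, Finset.sum_neg_distrib, hvs]
      ring
    rw [this]
    constructor <;> intro h <;> linarith
  rw [hset, measure_preimage_add_right volume (-v) _, hnull]

lemma vol_corner (n : ℕ) (hn : 1 ≤ n) :
    volume {y : Fin n → ℝ | (∀ i, 0 ≤ y i ∧ y i ≤ 1) ∧ ∑ i, y i < 1}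
      = ENNReal.ofReal (1 / n.factorial) := by
  classical
  set U := {y : Fin n → ℝ | (∀ i, 0 ≤ y i ∧ y i ≤ 1) ∧ ∑ i, y i < 1} with hU
  set Sx := {y : Fin n → ℝ | (∀ i, 0 ≤ y i) ∧ ∑ i, y i ≤ 1} with hS
  have hUS : U ⊆ Sx := by
    rintro y ⟨h1, h2⟩; exact ⟨fun i => (h1 i).1, h2.le⟩
  have hSU : Sx \ {y : Fin n → ℝ | ∑ i, y i = 1} ⊆ U := by
    rintro y ⟨⟨h1, h2⟩, h3⟩
    refine ⟨fun i => ⟨h1 i, ?_⟩, lt_of_le_of_ne h2 h3⟩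
    calc y i ≤ ∑ j, y j := Finset.single_le_sum (fun j _ => h1 j) (Finset.mem_univ i)
    _ ≤ 1 := h2
  have hvol : volume Sx = ENNReal.ofReal (1 / n.factorial) := by
    have := vol_simplex n 1 zero_le_one
    rwa [one_pow] at this
  refine le_antisymm ?_ ?_
  · rw [← hvol]; exact measure_mono hUS
  · rw [← hvol, ← measure_diff_null (vol_hyperplane n hn)]
    exact measure_mono hSU

lemma card_symmDiff_mod (α : Type*) [DecidableEq α] (S T : Finset α) :
    (S ∆ T).card % 2 = (S.card + T.card) % 2 := by
  have h1 : (S \ T).card + (S ∩ T).card = S.card := Finset.card_sdiff_add_card_inter S T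
  have h2 : (T \ S).card + (T ∩ S).card = T.card := Finset.card_sdiff_add_card_inter T S
  have h3 : (S ∆ T).card = (S \ T).card + (T \ S).card := by
    rw [symmDiff_def, Finset.sup_eq_union, Finset.card_union_of_disjoint]
    exact disjoint_sdiff_sdiff
  have h4 : (S ∩ T).card = (T ∩ S).card := by rw [Finset.inter_comm]
  omega

lemma card_odds (n : ℕ) (hn : 1 ≤ n) :
    (Finset.univ.filter fun S : Finset (Fin n) => Odd S.card).card = 2 ^ (n - 1) := by
  classical
  set i0 : Fin n := ⟨0, hn⟩
  have key : (Finset.univ.filter fun S : Finset (Fin n) => Odd S.card).card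
      = (Finset.univ.filter fun S : Finset (Fin n) => ¬ Odd S.card).card := by
    apply Finset.card_bij (fun S _ => S ∆ {i0})
    · intro S hS
      simp only [Finset.mem_filter, Finset.mem_univ, true_and] at hS ⊢
      have := card_symmDiff_mod (Fin n) S {i0}
      rw [Finset.card_singleton] at this
      rw [Nat.odd_iff] at hS ⊢
      omega
    · intro S hS T hT h
      have : S ∆ {i0} ∆ {i0} = T ∆ {i0} ∆ {i0} := by rw [h]
      rwa [symmDiff_symmDiff_cancel_right, symmDiff_symmDiff_cancel_right] at this
    · intro T hT
      refine ⟨T ∆ {i0}, ?_, by rw [symmDiff_symmDiff_cancel_right]⟩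
      simp only [Finset.mem_filter, Finset.mem_univ, true_and] at hT ⊢
      have := card_symmDiff_mod (Fin n) T {i0}
      rw [Finset.card_singleton] at this
      rw [Nat.odd_iff] at hT ⊢
      omega
  have htot := Finset.card_filter_add_card_filter_not
    (s := (Finset.univ : Finset (Finset (Fin n)))) (p := fun S => Odd S.card)
  have hcard : (Finset.univ : Finset (Finset (Fin n))).card = 2 ^ n := by
    simp [Finset.card_univ]
  have hpow : 2 ^ n = 2 * 2 ^ (n - 1) := by
    rw [← pow_succ']
    congr 1
    omega
  omega

theorem stmt11 (n : ℕ) (hn : 1 ≤ n) :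
    volume {x : Fin n → ℝ |
        (∀ i, 0 ≤ x i ∧ x i ≤ 1) ∧
        ∀ S : Finset (Fin n), Odd S.card →
          (∑ i ∈ Sᶜ, x i) - ∑ i ∈ S, x i ≤ (n : ℝ) - S.card - 1} =
      ENNReal.ofReal (1 - 2 ^ (n - 1) / n.factorial) := by
  classical
  set g : Finset (Fin n) → (Fin n → ℝ) → ℝ :=
    fun S x => ∑ i, (if i ∈ S then 1 - x i else x i) with hg
  have hgid : ∀ (S : Finset (Fin n)) (x : Fin n → ℝ),
      (∑ i ∈ Sᶜ, x i) - ∑ i ∈ S, x i = g S x - S.card := by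
    intro S x
    have h1 : g S x = (∑ i ∈ S, (1 - x i)) + ∑ i ∈ Sᶜ, x i := by
      show (∑ i, (if i ∈ S then 1 - x i else x i)) = _
      rw [← Finset.sum_filter_add_sum_filter_not Finset.univ (· ∈ S)]
      congr 1
      · rw [Finset.sum_congr rfl (fun i hi => if_pos (Finset.mem_filter.mp hi).2)]
        congr 1
        ext i; simp
      · rw [Finset.sum_congr rfl (fun i hi => if_neg (Finset.mem_filter.mp hi).2)]
        congr 1
        ext i; simp
    have h2 : ∑ i ∈ S, (1 - x i) = S.card - ∑ i ∈ S, x i := by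
      rw [Finset.sum_sub_distrib, Finset.sum_const, nsmul_eq_mul, mul_one]
    rw [h1, h2]; ring
  set R : Finset (Fin n) → Set (Fin n → ℝ) :=
    fun S => {x | (∀ i, 0 ≤ x i ∧ x i ≤ 1) ∧ (n : ℝ) - 1 < g S x} with hR
  set Odds : Finset (Finset (Fin n)) := Finset.univ.filter (fun S => Odd S.card) with hOdds
  set cube : Set (Fin n → ℝ) := {x | ∀ i, 0 ≤ x i ∧ x i ≤ 1} with hcube
  -- measurability
  have hcubem : MeasurableSet cube := by
    have : cube = ⋂ i, ({x : Fin n → ℝ | 0 ≤ x i} ∩ {x | x i ≤ 1}) := by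
      ext x; simp [hcube, Set.mem_iInter, forall_and]
    rw [this]
    exact MeasurableSet.iInter fun i =>
      (measurableSet_le measurable_const (measurable_pi_apply i)).inter
        (measurableSet_le (measurable_pi_apply i) measurable_const)
  have hgm : ∀ S : Finset (Fin n), Measurable (g S) := by
    intro S
    apply Finset.measurable_sum
    intro i _
    by_cases h : i ∈ S <;> simp only [h, if_true, if_false]
    · exact measurable_const.sub (measurable_pi_apply i)
    · exact measurable_pi_apply i
  have hRm : ∀ S : Finset (Fin n), MeasurableSet (R S) := by
    intro S
    have : R S = cube ∩ {x | (n : ℝ) - 1 < g S x} := by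
      ext x; simp [hR, hcube]
    rw [this]
    exact hcubem.inter (measurableSet_lt measurable_const (hgm S))
  -- volume of cube
  have hcvol : volume cube = 1 := by
    have : cube = Set.pi Set.univ fun _ : Fin n => Set.Icc (0:ℝ) 1 := by
      ext x; simp [hcube, Set.mem_pi, Set.mem_Icc, Pi.le_def, forall_and]
    rw [this, volume_pi_pi]
    simp [Real.volume_Icc]
  -- volume of each corner piece
  have hRvol : ∀ S : Finset (Fin n), volume (R S) = ENNReal.ofReal (1 / n.factorial) := by
    intro S
    set T : (Fin n → ℝ) → (Fin n → ℝ) :=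
      fun x i => if i ∈ S then x i else 1 - x i with hT
    have hone : MeasurePreserving (fun a : ℝ => 1 - a) volume volume := by
      have hneg : MeasurePreserving (fun a : ℝ => -a) volume volume :=
        Measure.measurePreserving_neg volume
      have hadd : MeasurePreserving (fun a : ℝ => 1 + a) volume volume :=
        measurePreserving_add_left volume 1
      have := hadd.comp hneg
      simpa [sub_eq_add_neg, Function.comp_def] using this
    have hTmp : MeasurePreserving T volume volume := by
      have := volume_preserving_pi
        (f := fun (i : Fin n) (a : ℝ) => if i ∈ S then a else 1 - a)
        (fun i => by by_cases h : i ∈ S <;> simp only [h, if_true, if_false]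
                     exacts [MeasurePreserving.id volume, hone])
      convert this using 1
    have hpre : R S = T ⁻¹' {y : Fin n → ℝ | (∀ i, 0 ≤ y i ∧ y i ≤ 1) ∧ ∑ i, y i < 1} := by
      ext x
      have hsum : ∑ i, T x i = n - g S x := by
        rw [hg, hT]
        rw [eq_sub_iff_add_eq, ← Finset.sum_add_distrib]
        have : ∀ i : Fin n,
            (if i ∈ S then x i else 1 - x i) + (if i ∈ S then 1 - x i else x i) = 1 := by
          intro i; by_cases h : i ∈ S <;> simp [h]
        rw [Finset.sum_congr rfl fun i _ => this i]
        simp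
      simp only [hR, Set.mem_setOf_eq, Set.mem_preimage]
      constructor
      · rintro ⟨h1, h2⟩
        refine ⟨fun i => ?_, by rw [hsum]; linarith⟩
        by_cases h : i ∈ S <;> simp only [hT, h, if_true, if_false]
        · exact h1 i
        · constructor <;> linarith [(h1 i).1, (h1 i).2]
      · rintro ⟨h1, h2⟩
        rw [hsum] at h2
        refine ⟨fun i => ?_, by linarith⟩
        have := h1 i
        by_cases h : i ∈ S <;> simp only [hT, h, if_true, if_false] at this
        · exact this
        · constructor <;> linarith [this.1, this.2]
    have hcm : MeasurableSet {y : Fin n → ℝ | (∀ i, 0 ≤ y i ∧ y i ≤ 1) ∧ ∑ i, y i < 1} := by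
      have : {y : Fin n → ℝ | (∀ i, 0 ≤ y i ∧ y i ≤ 1) ∧ ∑ i, y i < 1}
          = cube ∩ {y | ∑ i, y i < 1} := by
        ext y; simp [hcube]
      rw [this]
      exact hcubem.inter (measurableSet_lt
        (Finset.measurable_sum _ fun i _ => measurable_pi_apply i) measurable_const)
    rw [hpre, hTmp.measure_preimage hcm.nullMeasurableSet]
    exact vol_corner n hn
  -- disjointness
  have hdisj : (↑Odds : Set (Finset (Fin n))).PairwiseDisjoint R := by
    intro S hS T hT hST
    simp only [Function.onFun]
    rw [Set.disjoint_left]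
    intro x hxS hxT
    obtain ⟨hx1, hx2⟩ := hxS
    obtain ⟨-, hx3⟩ := hxT
    simp only [hOdds, Finset.coe_filter, Set.mem_setOf_eq, Finset.mem_univ, true_and] at hS hT
    -- bound on the sum
    have hbound : g S x + g T x ≤ 2 * n - (S ∆ T).card := by
      have h1 : g S x + g T x
          = ∑ i, ((if i ∈ S then 1 - x i else x i) + (if i ∈ T then 1 - x i else x i)) := by
        rw [hg, Finset.sum_add_distrib]
      have h2 : ∀ i : Fin n,
          (if i ∈ S then 1 - x i else x i) + (if i ∈ T then 1 - x i else x i)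
            ≤ 2 - (if i ∈ S ∆ T then (1:ℝ) else 0) := by
        intro i
        have hxi := hx1 i
        by_cases hiS : i ∈ S <;> by_cases hiT : i ∈ T
        · rw [if_pos hiS, if_pos hiT, if_neg (by simp [Finset.mem_symmDiff, hiS, hiT])]
          linarith [hxi.1]
        · rw [if_pos hiS, if_neg hiT, if_pos (by simp [Finset.mem_symmDiff, hiS, hiT])]
          linarith
        · rw [if_neg hiS, if_pos hiT, if_pos (by simp [Finset.mem_symmDiff, hiS, hiT])]
          linarith
        · rw [if_neg hiS, if_neg hiT, if_neg (by simp [Finset.mem_symmDiff, hiS, hiT])]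
          linarith [hxi.2]
      have h3 : ∑ i : Fin n, (2 - (if i ∈ S ∆ T then (1:ℝ) else 0))
          = 2 * n - (S ∆ T).card := by
        rw [Finset.sum_sub_distrib, Finset.sum_const, Finset.sum_boole]
        simp [Finset.filter_mem_eq_inter, mul_comm]
      calc g S x + g T x ≤ ∑ i : Fin n, (2 - (if i ∈ S ∆ T then (1:ℝ) else 0)) := by
            rw [h1]; exact Finset.sum_le_sum fun i _ => h2 i
        _ = 2 * n - (S ∆ T).card := h3
    have hcard2 : 2 ≤ (S ∆ T).card := by
      have hmod := card_symmDiff_mod (Fin n) S T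
      have hSodd := Nat.odd_iff.mp hS
      have hTodd := Nat.odd_iff.mp hT
      have hne : (S ∆ T).card ≠ 0 := by
        intro h
        apply hST
        apply symmDiff_eq_bot.mp
        rw [bot_eq_empty]
        exact Finset.card_eq_zero.mp h
      omega
    have : (2 : ℝ) ≤ (S ∆ T).card := by exact_mod_cast hcard2
    linarith
  -- the union
  set Un : Set (Fin n → ℝ) := ⋃ S ∈ Odds, R S with hUn
  have hUnvol : volume Un = ENNReal.ofReal (2 ^ (n-1) / n.factorial) := by
    rw [hUn, measure_biUnion_finset hdisj (fun S _ => hRm S)]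
    rw [Finset.sum_congr rfl (fun S _ => hRvol S), Finset.sum_const, card_odds n hn,
      nsmul_eq_mul]
    rw [← ENNReal.ofReal_natCast, ← ENNReal.ofReal_mul (by positivity)]
    congr 1
    push_cast
    ring
  have hsub : Un ⊆ cube := by
    rw [hUn]
    refine Set.iUnion₂_subset fun S _ => ?_
    rintro x ⟨h1, -⟩
    exact h1
  have hUnm : MeasurableSet Un := by
    rw [hUn]
    exact Finset.measurableSet_biUnion _ (fun S _ => hRm S)
  -- the target set is cube minus the union
  have hAeq : {x : Fin n → ℝ |
        (∀ i, 0 ≤ x i ∧ x i ≤ 1) ∧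
        ∀ S : Finset (Fin n), Odd S.card →
          (∑ i ∈ Sᶜ, x i) - ∑ i ∈ S, x i ≤ (n : ℝ) - S.card - 1} = cube \ Un := by
    ext x
    simp only [Set.mem_setOf_eq, Set.mem_diff]
    constructor
    · rintro ⟨h1, h2⟩
      refine ⟨h1, ?_⟩
      rw [hUn]
      simp only [Set.mem_iUnion, not_exists]
      intro S hS hx
      simp only [hOdds, Finset.mem_filter, Finset.mem_univ, true_and] at hS
      have := h2 S hS
      rw [hgid S x] at this
      have hlt := hx.2
      linarith
    · rintro ⟨h1, h2⟩
      refine ⟨h1, fun S hS => ?_⟩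
      rw [hgid S x]
      by_contra hcon
      push_neg at hcon
      apply h2
      rw [hUn]
      simp only [Set.mem_iUnion]
      refine ⟨S, by simp [hOdds, hS], h1, by linarith⟩
  rw [hAeq, measure_diff hsub hUnm.nullMeasurableSet
    (by rw [hUnvol]; exact ENNReal.ofReal_ne_top), hcvol, hUnvol]
  rw [ENNReal.ofReal_sub _ (by positivity), ENNReal.ofReal_one]
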